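/- Let σ ∈ {−1,+1}, ω ∈ ℝ, w, Φ, c : ℝ → ℝ with w > 0, Φ continuous, c continuously differentiable with c' > 0 on [A,B], and let ψ, φ : ℝ → ℂ with ψ continuously differentiable satisfy w·φ = −σψ' − iωψ + iΦψ. Then ∫_A^B c'|ψ|² dr* ≤ 2c(B)|ψ(B)|² − 2c(A)|ψ(A)|² + ∫_A^B (4w²c²/c')·|φ|² dr*. -/

import Mathlib

open intervalIntegral MeasureTheory

/-- Cauchy–Schwarz refinement of the transport identity: if `w·φ = −σψ' − iωψ + iΦψ` with
`σ = ±1` and `c' > 0` on `[A,B]`, then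
`∫_A^B c'|ψ|² ≤ 2c(B)|ψ(B)|² − 2c(A)|ψ(A)|² + ∫_A^B (4w²c²/c')|φ|²`. -/
theorem stmt_10 (σ ω : ℝ) (hσ : σ = 1 ∨ σ = -1) (w Φ c : ℝ → ℝ)
    (hw : ∀ x, 0 < w x) (hΦ : Continuous Φ) (hc : ContDiff ℝ 1 c)
    (A B : ℝ) (hAB : A ≤ B) (hc' : ∀ x ∈ Set.Icc A B, 0 < deriv c x)
    (ψ φ : ℝ → ℂ) (hψ : ContDiff ℝ 1 ψ)
    (htr : ∀ x, (w x : ℂ) * φ x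
      = -(σ : ℂ) * deriv ψ x - Complex.I * (ω : ℂ) * ψ x + Complex.I * (Φ x : ℂ) * ψ x) :
    ∫ x in A..B, deriv c x * ‖ψ x‖^2
      ≤ 2*(c B)*‖ψ B‖^2 - 2*(c A)*‖ψ A‖^2
        + ∫ x in A..B, (4*(w x)^2*(c x)^2/deriv c x) * ‖φ x‖^2 := by
  have hψd : Continuous (deriv ψ) := hψ.continuous_deriv le_rfl
  have hcd : Continuous (deriv c) := hc.continuous_deriv le_rfl
  have hψc : Continuous ψ := hψ.continuous
  have hcc : Continuous c := hc.continuous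
  set g : ℝ → ℂ := fun x => (w x : ℂ) * φ x with hg
  have hgc : Continuous g := by
    have : g = fun x => -(σ : ℂ) * deriv ψ x - Complex.I * (ω : ℂ) * ψ x
        + Complex.I * (Φ x : ℂ) * ψ x := funext htr
    rw [this]; fun_prop
  have hψ' : ∀ x, HasDerivAt ψ (deriv ψ x) x := fun x => (hψ.differentiable one_ne_zero x).hasDerivAt
  have hcat : ∀ x, HasDerivAt c (deriv c x) x := fun x => (hc.differentiable one_ne_zero x).hasDerivAt
  set F : ℝ → ℝ := fun x => c x * ‖ψ x‖^2 with hF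
  have hinner : ∀ x, (inner ℝ (ψ x) (deriv ψ x) : ℝ) = -σ * (inner ℝ (ψ x) (g x) : ℝ) := by
    intro x
    have hd : deriv ψ x = -(σ:ℂ) * g x - (σ:ℂ) * (Complex.I * (ω:ℂ) * ψ x)
        + (σ:ℂ) * (Complex.I * (Φ x:ℂ) * ψ x) := by
      have h := htr x
      rcases hσ with h1 | h1 <;> subst h1 <;> push_cast at h ⊢ <;>
        first
        | linear_combination h
        | linear_combination -h
    rw [Complex.inner, Complex.inner, hd]
    simp [Complex.mul_re, Complex.mul_im, Complex.add_re, Complex.sub_re]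
    ring
  have hFd : ∀ x, HasDerivAt F
      (deriv c x * ‖ψ x‖^2 - 2*σ*(c x)*(inner ℝ (ψ x) (g x) : ℝ)) x := by
    intro x
    have h1 := (hcat x).mul ((hψ' x).norm_sq)
    exact h1.congr_deriv (by rw [hinner x]; ring)
  set F' : ℝ → ℝ := fun x => deriv c x * ‖ψ x‖^2 - 2*σ*(c x)*(inner ℝ (ψ x) (g x) : ℝ) with hF'
  have hF'c : Continuous F' := by
    have hci : Continuous fun x => (inner ℝ (ψ x) (g x) : ℝ) := hψc.inner hgc
    exact (hcd.mul (hψc.norm.pow 2)).sub ((continuous_const.mul hcc).mul hci)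
  -- pointwise inequality on Icc
  have hpt : ∀ x ∈ Set.Icc A B,
      (deriv c x * ‖ψ x‖^2)/2 ≤ F' x + ((4*(w x)^2*(c x)^2/deriv c x) * ‖φ x‖^2)/2 := by
    intro x hx
    have ht : 0 < deriv c x := hc' x hx
    have hgx : ‖g x‖ = w x * ‖φ x‖ := by
      rw [hg]; simp [Complex.norm_real, abs_of_pos (hw x)]
    have hCS : |(inner ℝ (ψ x) (g x) : ℝ)| ≤ ‖ψ x‖ * ‖g x‖ := abs_real_inner_le_norm _ _
    have hσ1 : |σ| = 1 := by rcases hσ with h | h <;> simp [h]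
    have hb : 2*σ*(c x)*(inner ℝ (ψ x) (g x) : ℝ) ≤ 2 * |c x| * (‖ψ x‖*(w x * ‖φ x‖)) := by
      calc 2*σ*(c x)*(inner ℝ (ψ x) (g x) : ℝ) ≤ |2*σ*(c x)*(inner ℝ (ψ x) (g x) : ℝ)| :=
            le_abs_self _
        _ = 2 * |c x| * |(inner ℝ (ψ x) (g x) : ℝ)| := by
            rw [abs_mul, abs_mul, abs_mul, hσ1]; norm_num
        _ ≤ 2 * |c x| * (‖ψ x‖*(w x * ‖φ x‖)) := by
            rw [← hgx]
            exact mul_le_mul_of_nonneg_left hCS (by positivity)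
    have hkey : (deriv c x)/2*‖ψ x‖^2 + 2*(w x)^2*(c x)^2/(deriv c x)*‖φ x‖^2
        - 2 * |c x| * (‖ψ x‖*(w x * ‖φ x‖))
        = (deriv c x * ‖ψ x‖ - 2 * |c x| * (w x * ‖φ x‖))^2 / (2 * deriv c x) := by
      field_simp
      ring_nf
      rw [sq_abs]
      ring
    have hge : 0 ≤ (deriv c x * ‖ψ x‖ - 2 * |c x| * (w x * ‖φ x‖))^2 / (2 * deriv c x) := by
      positivity
    have h2 : (4*(w x)^2*(c x)^2/deriv c x) * ‖φ x‖^2 / 2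
        = 2*(w x)^2*(c x)^2/(deriv c x)*‖φ x‖^2 := by ring
    show (deriv c x * ‖ψ x‖^2)/2
        ≤ (deriv c x * ‖ψ x‖^2 - 2*σ*(c x)*(inner ℝ (ψ x) (g x) : ℝ))
          + ((4*(w x)^2*(c x)^2/deriv c x) * ‖φ x‖^2)/2
    linarith [hkey, hge, hb, h2]
  -- integrability
  have hIcc : Set.uIcc A B = Set.Icc A B := Set.uIcc_of_le hAB
  have hcont2 : ContinuousOn (fun x => (4*(w x)^2*(c x)^2/deriv c x) * ‖φ x‖^2) (Set.Icc A B) := by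
    have h4 : ContinuousOn (fun x => 4*(w x)^2*(c x)^2*‖φ x‖^2/deriv c x) (Set.Icc A B) := by
      apply ContinuousOn.div
      · have : Continuous fun x => 4*(c x)^2*‖g x‖^2 := by fun_prop
        have heq : (fun x => 4*(w x)^2*(c x)^2*‖φ x‖^2) = fun x => 4*(c x)^2*‖g x‖^2 := by
          funext x
          have : ‖g x‖ = w x * ‖φ x‖ := by
            rw [hg]; simp [Complex.norm_real, abs_of_pos (hw x)]
          rw [this]; ring
        rw [heq]; exact this.continuousOn
      · exact hcd.continuousOn
      · intro x hx; exact (hc' x hx).ne'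
    have heq : (fun x => (4*(w x)^2*(c x)^2/deriv c x) * ‖φ x‖^2)
        = fun x => 4*(w x)^2*(c x)^2*‖φ x‖^2/deriv c x := by
      funext x; ring
    rw [heq]; exact h4
  have hint2 : IntervalIntegrable (fun x => (4*(w x)^2*(c x)^2/deriv c x) * ‖φ x‖^2)
      volume A B := (hcont2.mono (by rw [hIcc])).intervalIntegrable
  have hint1 : IntervalIntegrable (fun x => deriv c x * ‖ψ x‖^2) volume A B :=
    (hcd.mul (hψc.norm.pow 2)).intervalIntegrable A B
  have hintF' : IntervalIntegrable F' volume A B := hF'c.intervalIntegrable A B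
  -- integral of F'
  have hFTC : ∫ x in A..B, F' x = F B - F A := by
    apply intervalIntegral.integral_eq_sub_of_hasDerivAt
    · intro x _; exact hFd x
    · exact hintF'
  -- monotonicity
  have hmono : ∫ x in A..B, (deriv c x * ‖ψ x‖^2)/2
      ≤ ∫ x in A..B, (F' x + ((4*(w x)^2*(c x)^2/deriv c x) * ‖φ x‖^2)/2) := by
    apply intervalIntegral.integral_mono_on hAB
    · exact hint1.div_const 2
    · exact hintF'.add (hint2.div_const 2)
    · exact hpt
  rw [intervalIntegral.integral_add hintF' (hint2.div_const 2), hFTC,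
    intervalIntegral.integral_div, intervalIntegral.integral_div] at hmono
  simp only [hF] at hmono
  linarith
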